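/- For every μ ≥ 1, ∫_{x ∈ D_μ} ∏_{i < j} (p(x) i − p(x) j)² dx = Q̄_μ / Real.Gamma (μ²), i.e. the normalization constant of the Schmidt-coefficient density P(p) = N · ∏_{i<j}(p_i − p_j)² on the probability simplex is N = Real.Gamma (μ²) / Q̄_μ. -/

import Mathlib

open scoped BigOperators

open MeasureTheory Finset Matrix

/-- `Q̄_μ = μ! ∏_{k=0}^{μ-1} (k!)²`. -/
noncomputable def Qbar (μ : ℕ) : ℝ :=
  (μ.factorial : ℝ) * ∏ k ∈ Finset.range μ, ((k.factorial : ℝ)) ^ 2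

/-- The simplex domain `D_μ`. -/
def Dset (μ : ℕ) : Set (Fin (μ - 1) → ℝ) :=
  {x | (∀ i, 0 < x i) ∧ ∑ i, x i < 1}

/-- Extension of `x` to the probability simplex in `Fin μ → ℝ`. -/
noncomputable def pExt (μ : ℕ) (x : Fin (μ - 1) → ℝ) : Fin μ → ℝ :=
  fun i => if h : (i : ℕ) < μ - 1 then x ⟨i, h⟩ else 1 - ∑ j, x j

lemma beta01 (p q : ℕ) :
    ∫ t in (0:ℝ)..1, t ^ p * (1 - t) ^ q
      = (p.factorial * q.factorial : ℝ) / (p + q + 1).factorial := by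
  induction q generalizing p with
  | zero =>
    simp only [integral_pow, Nat.factorial_succ]
    have hp : ((p:ℝ)+1) ≠ 0 := by positivity
    have hf : ((p.factorial : ℝ)) ≠ 0 := by positivity
    push_cast
    field_simp
    rw [integral_pow]
    norm_num
    exact inv_mul_cancel₀ hp
  | succ q ih =>
    have key : ∀ t : ℝ, t ^ p * (1 - t) ^ (q + 1)
        = t ^ p * (1 - t) ^ q - t ^ (p + 1) * (1 - t) ^ q := by
      intro t; ring
    rw [intervalIntegral.integral_congr (g := fun t => t ^ p * (1-t) ^ q - t ^ (p+1) * (1-t) ^ q)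
      (fun t _ => key t)]
    rw [intervalIntegral.integral_sub
      ((Continuous.intervalIntegrable (by continuity) _ _))
      ((Continuous.intervalIntegrable (by continuity) _ _))]
    rw [ih p, ih (p + 1)]
    have h1 : p + (q + 1) + 1 = (p + q + 1) + 1 := by omega
    have h2 : p + 1 + q + 1 = (p + q + 1) + 1 := by omega
    rw [h1, h2, Nat.factorial_succ (p + q + 1), Nat.factorial_succ q, Nat.factorial_succ p]
    have hfac : ((p + q + 1).factorial : ℝ) ≠ 0 := by positivity
    field_simp
    push_cast
    ring

lemma betaScaled (p q : ℕ) (c : ℝ) :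
    ∫ t in (0:ℝ)..c, t ^ p * (c - t) ^ q
      = (p.factorial * q.factorial : ℝ) / (p + q + 1).factorial * c ^ (p + q + 1) := by
  have := intervalIntegral.smul_integral_comp_mul_left
    (a := (0:ℝ)) (b := 1) (f := fun t => t ^ p * (c - t) ^ q) c
  simp only [mul_zero, mul_one] at this
  rw [← this]
  have : ∀ t : ℝ, (c * t) ^ p * (c - c * t) ^ q = c ^ (p + q) * (t ^ p * (1 - t) ^ q) := by
    intro t
    have : c - c * t = c * (1 - t) := by ring
    rw [this, mul_pow, mul_pow]; ring
  rw [intervalIntegral.integral_congr (fun t _ => this t),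
    intervalIntegral.integral_const_mul, beta01, smul_eq_mul]
  ring

lemma lbeta (p q : ℕ) {c : ℝ} (hc : 0 < c) :
    ∫⁻ t in Set.Ioo (0:ℝ) c, ENNReal.ofReal (t ^ p * (c - t) ^ q)
      = ENNReal.ofReal ((p.factorial * q.factorial : ℝ) / (p + q + 1).factorial
          * c ^ (p + q + 1)) := by
  rw [← betaScaled p q c, intervalIntegral.integral_of_le hc.le,
    ofReal_integral_eq_lintegral_ofReal (Continuous.integrableOn_Ioc (by continuity))
      (by filter_upwards [ae_restrict_mem measurableSet_Ioc] with t ht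
          exact mul_nonneg (pow_nonneg ht.1.le _) (pow_nonneg (by linarith [ht.2]) _)),
    Measure.restrict_congr_set Ioo_ae_eq_Ioc]

def Sset (n : ℕ) (c : ℝ) : Set (Fin n → ℝ) := {x | (∀ i, 0 < x i) ∧ ∑ i, x i < c}

lemma measurableSet_Sset (n : ℕ) (c : ℝ) : MeasurableSet (Sset n c) := by
  have : Sset n c = (⋂ i, {x : Fin n → ℝ | 0 < x i}) ∩ {x | ∑ i, x i < c} := by
    ext x; simp [Sset, Set.mem_iInter]
  rw [this]
  exact (MeasurableSet.iInter fun i =>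
      measurableSet_lt measurable_const (measurable_pi_apply i)).inter
    (measurableSet_lt (Finset.measurable_sum _ fun i _ => measurable_pi_apply i)
      measurable_const)

lemma Sset_empty (n : ℕ) {c : ℝ} (hc : c ≤ 0) : Sset n c = ∅ := by
  ext x
  simp only [Sset, Set.mem_setOf_eq, Set.mem_empty_iff_false, iff_false, not_and]
  intro h
  have : (0:ℝ) ≤ ∑ i, x i := Finset.sum_nonneg fun i _ => (h i).le
  intro hlt; linarith

lemma dirichlet : ∀ (n : ℕ) (a : Fin n → ℕ) (b : ℕ) (c : ℝ), 0 < c →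
    ∫⁻ x in Sset n c, ENNReal.ofReal ((∏ i, x i ^ a i) * (c - ∑ i, x i) ^ b)
      = ENNReal.ofReal (((∏ i, (a i).factorial) * b.factorial : ℝ)
          / ((n + ∑ i, a i + b).factorial) * c ^ (n + ∑ i, a i + b)) := by
  intro n
  induction n with
  | zero =>
    intro a b c hc
    have hS : Sset 0 c = Set.univ := by
      ext x; simp [Sset, hc]
    rw [hS]
    simp only [Finset.univ_eq_empty, Finset.prod_empty, Finset.sum_empty, one_mul, sub_zero,
      Nat.zero_add, zero_add]
    rw [Measure.restrict_univ, lintegral_const, volume_pi, Measure.pi_univ]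
    simp only [Finset.univ_eq_empty, Finset.prod_empty, mul_one]
    congr 1
    rw [Nat.cast_one, one_mul, div_self (by positivity : ((b.factorial:ℝ)) ≠ 0), one_mul]
  | succ n ih =>
    intro a b c hc
    set p := a 0 with hp
    set M := n + (∑ j, a (Fin.succ j)) + b with hM
    have hfm : Measurable (fun x : Fin (n+1) → ℝ =>
        ENNReal.ofReal ((∏ i, x i ^ a i) * (c - ∑ i, x i) ^ b)) := by
      apply ENNReal.measurable_ofReal.comp
      exact (Finset.measurable_prod _ fun i _ => (measurable_pi_apply i).pow_const _).mul
        ((measurable_const.sub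
          (Finset.measurable_sum _ fun i _ => measurable_pi_apply i)).pow_const _)
    have hFm : Measurable ((Sset (n+1) c).indicator (fun x : Fin (n+1) → ℝ =>
        ENNReal.ofReal ((∏ i, x i ^ a i) * (c - ∑ i, x i) ^ b))) :=
      hfm.indicator (measurableSet_Sset _ _)
    rw [← lintegral_indicator (measurableSet_Sset _ _)]
    have mp := (volume_preserving_piFinSuccAbove (fun _ : Fin (n+1) => ℝ) 0).symm
    rw [← mp.lintegral_comp hFm]
    have hsymm : ∀ z : ℝ × (Fin n → ℝ),
        (MeasurableEquiv.piFinSuccAbove (fun _ : Fin (n+1) => ℝ) 0).symm z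
          = Fin.cons z.1 z.2 := by
      rintro ⟨t, y⟩
      simp only [MeasurableEquiv.piFinSuccAbove, MeasurableEquiv.symm_mk,
        MeasurableEquiv.coe_mk, Equiv.symm_symm, Fin.insertNthEquiv_zero,
        Fin.consEquiv_apply]
      rfl
    have hcompm : Measurable (fun z : ℝ × (Fin n → ℝ) =>
        (Sset (n+1) c).indicator (fun x : Fin (n+1) → ℝ =>
          ENNReal.ofReal ((∏ i, x i ^ a i) * (c - ∑ i, x i) ^ b))
          ((MeasurableEquiv.piFinSuccAbove (fun _ : Fin (n+1) => ℝ) 0).symm z)) :=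
      hFm.comp (MeasurableEquiv.piFinSuccAbove (fun _ : Fin (n+1) => ℝ) 0).symm.measurable
    rw [Measure.volume_eq_prod, lintegral_prod _ hcompm.aemeasurable]
    have hmem : ∀ (t : ℝ) (y : Fin n → ℝ),
        Fin.cons t y ∈ Sset (n+1) c ↔ (0 < t ∧ y ∈ Sset n (c - t)) := by
      intro t y
      simp only [Sset, Set.mem_setOf_eq, Fin.forall_fin_succ, Fin.cons_zero, Fin.cons_succ,
        Fin.sum_cons]
      constructor
      · rintro ⟨⟨h1, h2⟩, h3⟩; exact ⟨h1, h2, by linarith⟩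
      · rintro ⟨h1, h2, h3⟩; exact ⟨⟨h1, h2⟩, by linarith⟩
    have hval : ∀ (t : ℝ) (y : Fin n → ℝ),
        (∏ i, (Fin.cons t y : Fin (n+1) → ℝ) i ^ a i) * (c - ∑ i, (Fin.cons t y : Fin (n+1) → ℝ) i) ^ b
          = t ^ p * ((∏ j, y j ^ a (Fin.succ j)) * ((c - t) - ∑ j, y j) ^ b) := by
      intro t y
      rw [Fin.prod_univ_succ, Fin.sum_cons]
      simp only [Fin.cons_zero, Fin.cons_succ, hp]
      ring_nf
    have inner : ∀ t : ℝ,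
        (∫⁻ y, (Sset (n+1) c).indicator (fun x : Fin (n+1) → ℝ =>
          ENNReal.ofReal ((∏ i, x i ^ a i) * (c - ∑ i, x i) ^ b)) (Fin.cons t y))
        = (Set.Ioo (0:ℝ) c).indicator (fun t => ENNReal.ofReal (t ^ p)
            * ENNReal.ofReal (((∏ j, (a (Fin.succ j)).factorial) * b.factorial : ℝ)
                / M.factorial * (c - t) ^ M)) t := by
      intro t
      by_cases ht : 0 < t
      · by_cases htc : t < c
        · rw [Set.indicator_of_mem (Set.mem_Ioo.2 ⟨ht, htc⟩)]
          have hpt : ∀ y : Fin n → ℝ,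
              (Sset (n+1) c).indicator (fun x : Fin (n+1) → ℝ =>
                ENNReal.ofReal ((∏ i, x i ^ a i) * (c - ∑ i, x i) ^ b)) (Fin.cons t y)
              = ENNReal.ofReal (t ^ p) * (Sset n (c - t)).indicator (fun y =>
                  ENNReal.ofReal ((∏ j, y j ^ a (Fin.succ j)) * ((c - t) - ∑ j, y j) ^ b)) y := by
            intro y
            by_cases hy : y ∈ Sset n (c - t)
            · rw [Set.indicator_of_mem ((hmem t y).2 ⟨ht, hy⟩), Set.indicator_of_mem hy,
                hval, ENNReal.ofReal_mul (by positivity)]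
            · rw [Set.indicator_of_notMem, Set.indicator_of_notMem hy, mul_zero]
              intro hmem'; exact hy ((hmem t y).1 hmem').2
          rw [lintegral_congr hpt, lintegral_const_mul' _ _ ENNReal.ofReal_ne_top,
            lintegral_indicator (measurableSet_Sset _ _),
            ih (fun j => a (Fin.succ j)) b (c - t) (by linarith)]
        · rw [Set.indicator_of_notMem (by simp only [Set.mem_Ioo, not_and]; intro; linarith)]
          have hz : ∀ y : Fin n → ℝ,
              (Sset (n+1) c).indicator (fun x : Fin (n+1) → ℝ =>
                ENNReal.ofReal ((∏ i, x i ^ a i) * (c - ∑ i, x i) ^ b)) (Fin.cons t y) = 0 := by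
            intro y
            apply Set.indicator_of_notMem
            intro hmem'
            have h2 := ((hmem t y).1 hmem').2
            rw [Sset_empty n (by linarith : c - t ≤ 0)] at h2
            exact h2
          rw [lintegral_congr hz, lintegral_zero]
      · rw [Set.indicator_of_notMem (by simp only [Set.mem_Ioo, not_and]; intro h; exact absurd h ht)]
        have hz : ∀ y : Fin n → ℝ,
            (Sset (n+1) c).indicator (fun x : Fin (n+1) → ℝ =>
              ENNReal.ofReal ((∏ i, x i ^ a i) * (c - ∑ i, x i) ^ b)) (Fin.cons t y) = 0 := by
          intro y
          apply Set.indicator_of_notMem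
          intro hmem'
          exact ht ((hmem t y).1 hmem').1
        rw [lintegral_congr hz, lintegral_zero]
    simp only [hsymm]
    calc ∫⁻ t : ℝ, ∫⁻ y : Fin n → ℝ, (Sset (n+1) c).indicator (fun x : Fin (n+1) → ℝ =>
            ENNReal.ofReal ((∏ i, x i ^ a i) * (c - ∑ i, x i) ^ b)) (Fin.cons t y)
        = ∫⁻ t in Set.Ioo (0:ℝ) c, ENNReal.ofReal (t ^ p)
            * ENNReal.ofReal (((∏ j, (a (Fin.succ j)).factorial) * b.factorial : ℝ)
                / M.factorial * (c - t) ^ M) := by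
          rw [← lintegral_indicator measurableSet_Ioo]
          exact lintegral_congr inner
      _ = ENNReal.ofReal (((∏ j, (a (Fin.succ j)).factorial) * b.factorial : ℝ) / M.factorial)
            * ∫⁻ t in Set.Ioo (0:ℝ) c, ENNReal.ofReal (t ^ p * (c - t) ^ M) := by
          rw [← lintegral_const_mul' _ _ ENNReal.ofReal_ne_top]
          apply setLIntegral_congr_fun measurableSet_Ioo
          intro t htmem
          beta_reduce
          rw [← ENNReal.ofReal_mul (pow_nonneg htmem.1.le _),
            ← ENNReal.ofReal_mul (by positivity : (0:ℝ) ≤ ((∏ j, (a (Fin.succ j)).factorial) * b.factorial : ℝ) / M.factorial)]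
          congr 1
          ring
      _ = ENNReal.ofReal (((∏ i, (a i).factorial) * b.factorial : ℝ)
            / ((n + 1 + ∑ i, a i + b).factorial) * c ^ (n + 1 + ∑ i, a i + b)) := by
          rw [lbeta p M hc, ← ENNReal.ofReal_mul (by positivity)]
          congr 1
          have hE : p + M + 1 = n + 1 + ∑ i, a i + b := by
            rw [hM, hp, Fin.sum_univ_succ]; omega
          rw [hE, Fin.prod_univ_succ]
          have h1 : ((M.factorial : ℝ)) ≠ 0 := by positivity
          have h2 : (((n + 1 + ∑ i, a i + b).factorial : ℝ)) ≠ 0 := by positivity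
          push_cast
          field_simp
          ring

lemma pExt_eval (n : ℕ) (x : Fin n → ℝ) (k : Fin (n+1) → ℕ) :
    (∏ i, pExt (n+1) x i ^ k i)
      = (∏ j : Fin n, x j ^ k (Fin.castSucc j)) * (1 - ∑ j, x j) ^ k (Fin.last n) := by
  rw [Fin.prod_univ_castSucc]
  congr 1
  · apply Finset.prod_congr rfl
    intro j _
    congr 1
    show pExt (n+1) x (Fin.castSucc j) = x j
    have hlt : ((Fin.castSucc j : Fin (n+1)) : ℕ) < (n+1) - 1 := by
      simpa using j.isLt
    rw [pExt, dif_pos hlt]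
    exact congrArg x (Fin.ext (by simp))
  · congr 1
    show pExt (n+1) x (Fin.last n) = 1 - ∑ j, x j
    rw [pExt, dif_neg (by simp)]
    rfl

lemma pExt_continuous (n : ℕ) (i : Fin (n+1)) :
    Continuous fun x : Fin n → ℝ => pExt (n+1) x i := by
  unfold pExt
  by_cases h : (i : ℕ) < (n+1) - 1
  · simp only [dif_pos h]
    exact continuous_apply _
  · simp only [dif_neg h]
    exact continuous_const.sub (by fun_prop)

lemma pExt_mem_Icc (n : ℕ) {x : Fin n → ℝ} (hx : x ∈ Sset n 1) (i : Fin (n+1)) :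
    pExt (n+1) x i ∈ Set.Icc (0:ℝ) 1 := by
  obtain ⟨hpos, hsum⟩ := hx
  have hnn : ∀ j, (0:ℝ) ≤ x j := fun j => (hpos j).le
  have hsnn : (0:ℝ) ≤ ∑ j, x j := Finset.sum_nonneg fun j _ => hnn j
  rw [pExt]
  have hred : ∑ j : Fin (n + 1 - 1), x j = ∑ j : Fin n, x j := rfl
  by_cases h : (i : ℕ) < (n+1) - 1
  · rw [dif_pos h]
    constructor
    · exact hnn _
    · have : x ⟨(i:ℕ), h⟩ ≤ ∑ j, x j :=
        Finset.single_le_sum (fun j _ => hnn j) (Finset.mem_univ _)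
      linarith
  · rw [dif_neg h, hred]
    constructor <;> linarith

lemma Sset_vol_ne_top (n : ℕ) : volume (Sset n 1) ≠ ⊤ := by
  have hsub : Sset n 1 ⊆ Set.pi Set.univ fun _ : Fin n => Set.Ioo (0:ℝ) 1 := by
    intro x hx
    intro j _
    obtain ⟨hpos, hsum⟩ := hx
    refine ⟨hpos j, ?_⟩
    have : x j ≤ ∑ i, x i :=
      Finset.single_le_sum (fun i _ => (hpos i).le) (Finset.mem_univ _)
    linarith
  refine ne_top_of_le_ne_top ?_ (measure_mono hsub)
  rw [volume_pi_pi]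
  simp [Real.volume_Ioo]

lemma monomial_integrable (n : ℕ) (k : Fin (n+1) → ℕ) :
    IntegrableOn (fun x : Fin n → ℝ => ∏ i, pExt (n+1) x i ^ k i) (Sset n 1) := by
  apply Measure.integrableOn_of_bounded (Sset_vol_ne_top n)
  · exact (Continuous.aestronglyMeasurable (by
      exact continuous_finset_prod _ fun i _ => (pExt_continuous n i).pow _))
  · filter_upwards [ae_restrict_mem (measurableSet_Sset n 1)] with x hx
    rw [Real.norm_eq_abs, abs_of_nonneg (Finset.prod_nonneg fun i _ =>
      pow_nonneg (pExt_mem_Icc n hx i).1 _)]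
    apply Finset.prod_le_one
    · intro i _; exact pow_nonneg (pExt_mem_Icc n hx i).1 _
    · intro i _; exact pow_le_one₀ (pExt_mem_Icc n hx i).1 (pExt_mem_Icc n hx i).2

lemma monomial_integral (n : ℕ) (k : Fin (n + 1) → ℕ) :
    ∫ x in Sset n 1, ∏ i, pExt (n + 1) x i ^ k i
      = ((∏ i, (k i).factorial : ℕ) : ℝ) / ((n + ∑ i, k i).factorial) := by
  simp only [pExt_eval]
  rw [integral_eq_lintegral_of_nonneg_ae]
  · rw [dirichlet n (fun j => k (Fin.castSucc j)) (k (Fin.last n)) 1 one_pos]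
    rw [one_pow, mul_one, ENNReal.toReal_ofReal (by positivity)]
    have hs : n + ∑ i : Fin n, k i.castSucc + k (Fin.last n)
        = n + ∑ i : Fin (n+1), k i := by
      rw [Fin.sum_univ_castSucc]; omega
    rw [hs, ← Nat.cast_mul, ← Fin.prod_univ_castSucc fun i => (k i).factorial]
  · filter_upwards [ae_restrict_mem (measurableSet_Sset n 1)] with x hx
    obtain ⟨hpos, hsum⟩ := hx
    have h1 : (0:ℝ) ≤ 1 - ∑ j, x j := by linarith
    exact mul_nonneg (Finset.prod_nonneg fun j _ => pow_nonneg (hpos j).le _)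
      (pow_nonneg h1 _)
  · apply Continuous.aestronglyMeasurable
    fun_prop

lemma vandermonde_nat (m : ℕ) (i j : Fin m) :
    (((i:ℕ) + (j:ℕ)).factorial)
      = ∑ k : Fin m, ((i:ℕ).factorial * Nat.choose i k) * ((j:ℕ).factorial * Nat.choose j k) := by
  have hch : ((i:ℕ) + (j:ℕ)).choose j = ∑ k : Fin m, Nat.choose i k * Nat.choose j k := by
    rw [Nat.add_choose_eq, Finset.Nat.sum_antidiagonal_eq_sum_range_succ_mk]
    rw [Fin.sum_univ_eq_sum_range (fun k => Nat.choose i k * Nat.choose j k) m]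
    have hsub : Finset.range ((j:ℕ)+1) ⊆ Finset.range m := by
      apply Finset.range_subset_range.2; exact j.isLt
    rw [← Finset.sum_subset hsub (fun k _ hk => by
      have hjk : (j:ℕ) < k := by simp only [Finset.mem_range] at hk; omega
      rw [Nat.choose_eq_zero_of_lt hjk, mul_zero])]
    apply Finset.sum_congr rfl
    intro k hk
    have hk' : k ≤ (j:ℕ) := by simp only [Finset.mem_range] at hk; omega
    show Nat.choose i k * Nat.choose j ((j:ℕ) - k) = _
    rw [Nat.choose_symm hk']
  have hmain := Nat.choose_mul_factorial_mul_factorial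
    (Nat.le_add_left (j:ℕ) (i:ℕ)) -- C(i+j, j) * j! * (i+j-j)! = (i+j)!
  rw [Nat.add_sub_cancel] at hmain
  calc ((i:ℕ) + (j:ℕ)).factorial
      = (((i:ℕ)+(j:ℕ)).choose j) * (j:ℕ).factorial * (i:ℕ).factorial := hmain.symm
    _ = (∑ k : Fin m, Nat.choose i k * Nat.choose j k) * (j:ℕ).factorial * (i:ℕ).factorial := by
        rw [hch]
    _ = _ := by
        rw [Finset.sum_mul, Finset.sum_mul]
        apply Finset.sum_congr rfl
        intro k _
        ring

lemma hankel_det (μ : ℕ) :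
    Matrix.det (Matrix.of fun i j : Fin μ => (((i:ℕ) + (j:ℕ)).factorial : ℝ))
      = ∏ k : Fin μ, (((k:ℕ).factorial : ℝ)) ^ 2 := by
  set B : Matrix (Fin μ) (Fin μ) ℝ :=
    Matrix.of fun i k => (((i:ℕ).factorial * Nat.choose i k : ℕ) : ℝ) with hB
  have hH : Matrix.of (fun i j : Fin μ => (((i:ℕ) + (j:ℕ)).factorial : ℝ)) = B * Bᵀ := by
    ext i j
    simp only [Matrix.mul_apply, Matrix.transpose_apply, hB, Matrix.of_apply]
    exact_mod_cast vandermonde_nat μ i j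
  have hBtri : B.BlockTriangular OrderDual.toDual := by
    intro i j hij
    simp only [hB, Matrix.of_apply]
    have hij' : (i:ℕ) < (j:ℕ) := by
      have := OrderDual.toDual_lt_toDual.1 hij
      exact_mod_cast this
    rw [Nat.choose_eq_zero_of_lt hij', mul_zero, Nat.cast_zero]
  have hdetB : B.det = ∏ i : Fin μ, (((i:ℕ).factorial : ℕ) : ℝ) := by
    rw [Matrix.det_of_lowerTriangular B hBtri]
    apply Finset.prod_congr rfl
    intro i _
    simp [hB]
  rw [hH, Matrix.det_mul, Matrix.det_transpose, hdetB]
  rw [← Finset.prod_mul_distrib]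
  apply Finset.prod_congr rfl
  intro k _
  ring

lemma perm_sum (μ : ℕ) :
    ∑ σ : Equiv.Perm (Fin μ), ∑ τ : Equiv.Perm (Fin μ),
      ((Equiv.Perm.sign σ : ℤ) : ℝ) * ((Equiv.Perm.sign τ : ℤ) : ℝ)
        * ∏ i, ((((σ i : ℕ) + (τ i : ℕ)).factorial : ℝ))
      = (μ.factorial : ℝ) * ∏ k : Fin μ, ((k:ℕ).factorial : ℝ) ^ 2 := by
  have hστ : ∀ σ : Equiv.Perm (Fin μ),
      (∑ τ : Equiv.Perm (Fin μ), ((Equiv.Perm.sign σ : ℤ) : ℝ) * ((Equiv.Perm.sign τ : ℤ) : ℝ)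
        * ∏ i, ((((σ i : ℕ) + (τ i : ℕ)).factorial : ℝ)))
      = ∑ π : Equiv.Perm (Fin μ), ((Equiv.Perm.sign π : ℤ) : ℝ)
          * ∏ j : Fin μ, ((((j : ℕ) + (π j : ℕ)).factorial : ℝ)) := by
    intro σ
    rw [← Equiv.sum_comp (Equiv.mulRight σ)
      (fun τ : Equiv.Perm (Fin μ) => ((Equiv.Perm.sign σ : ℤ) : ℝ) * ((Equiv.Perm.sign τ : ℤ) : ℝ)
        * ∏ i, ((((σ i : ℕ) + (τ i : ℕ)).factorial : ℝ)))]
    apply Finset.sum_congr rfl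
    intro π _
    simp only [Equiv.coe_mulRight, Equiv.Perm.mul_apply]
    have hsgn : ((Equiv.Perm.sign σ : ℤ) : ℝ) * ((Equiv.Perm.sign (π * σ) : ℤ) : ℝ)
        = ((Equiv.Perm.sign π : ℤ) : ℝ) := by
      rw [Equiv.Perm.sign_mul]
      rcases Int.units_eq_one_or (Equiv.Perm.sign σ) with h | h <;>
        rcases Int.units_eq_one_or (Equiv.Perm.sign π) with h' | h' <;>
          simp [h, h']
    rw [hsgn]
    congr 1
    exact Equiv.prod_comp σ (fun j => (((j : ℕ) + (π j : ℕ)).factorial : ℝ))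
  rw [Finset.sum_congr rfl (fun σ _ => hστ σ), Finset.sum_const, Finset.card_univ,
    Fintype.card_perm, Fintype.card_fin, nsmul_eq_mul]
  congr 1
  rw [← hankel_det μ, Matrix.det_apply']
  apply Finset.sum_congr rfl
  intro π _
  congr 1
  apply Finset.prod_congr rfl
  intro i _
  rw [Matrix.of_apply, Nat.add_comm]

set_option maxHeartbeats 1000000 in
theorem schmidt_density_normalization (μ : ℕ) (hμ : 1 ≤ μ) :
    ∫ x in Dset μ, ∏ i, ∏ j ∈ Finset.Ioi i, (pExt μ x i - pExt μ x j) ^ 2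
      = Qbar μ / Real.Gamma ((μ : ℝ) ^ 2) := by
  obtain ⟨n, rfl⟩ : ∃ n, μ = n + 1 := ⟨μ - 1, by omega⟩
  show (∫ x in Sset n 1, ∏ i, ∏ j ∈ Finset.Ioi i, (pExt (n+1) x i - pExt (n+1) x j) ^ 2)
      = Qbar (n+1) / Real.Gamma (((n+1 : ℕ) : ℝ) ^ 2)
  set m : ℕ := n * n + 2 * n with hm
  -- pointwise expansion of the squared Vandermonde
  have hpt : ∀ x : Fin n → ℝ,
      (∏ i, ∏ j ∈ Finset.Ioi i, (pExt (n+1) x i - pExt (n+1) x j) ^ 2)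
      = ∑ σ : Equiv.Perm (Fin (n+1)), ∑ τ : Equiv.Perm (Fin (n+1)),
          ((Equiv.Perm.sign σ : ℤ) : ℝ) * ((Equiv.Perm.sign τ : ℤ) : ℝ)
            * ∏ i, pExt (n+1) x i ^ ((σ i : ℕ) + (τ i : ℕ)) := by
    intro x
    set v : Fin (n+1) → ℝ := pExt (n+1) x with hv
    have h1 : (∏ i, ∏ j ∈ Finset.Ioi i, (v i - v j) ^ 2)
        = (Matrix.vandermonde v).det ^ 2 := by
      rw [Matrix.det_vandermonde, ← Finset.prod_pow]
      apply Finset.prod_congr rfl; intro i _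
      rw [← Finset.prod_pow]
      apply Finset.prod_congr rfl; intro j _
      ring
    have h2 : (Matrix.vandermonde v).det
        = ∑ σ : Equiv.Perm (Fin (n+1)), ((Equiv.Perm.sign σ : ℤ) : ℝ)
            * ∏ i, v i ^ ((σ i : ℕ)) := by
      rw [← Matrix.det_transpose, Matrix.det_apply']
      apply Finset.sum_congr rfl
      intro σ _
      congr 1
    rw [h1, h2, sq, Finset.sum_mul_sum]
    apply Finset.sum_congr rfl; intro σ _
    apply Finset.sum_congr rfl; intro τ _
    rw [mul_mul_mul_comm, ← Finset.prod_mul_distrib]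
    congr 1
    apply Finset.prod_congr rfl; intro i _
    rw [pow_add]
  have hEint : ∀ (σ τ : Equiv.Perm (Fin (n+1))),
      n + (∑ i, ((σ i : ℕ) + (τ i : ℕ))) = m := by
    intro σ τ
    have hsum_perm : ∀ ρ : Equiv.Perm (Fin (n+1)),
        ∑ i, ((ρ i : ℕ)) = ∑ i : Fin (n+1), (i : ℕ) :=
      fun ρ => Equiv.sum_comp ρ (fun i : Fin (n+1) => (i : ℕ))
    have hgauss : (∑ i : Fin (n+1), (i : ℕ)) * 2 = (n+1) * n := by
      rw [Fin.sum_univ_eq_sum_range (fun i => i) (n+1), Finset.sum_range_id_mul_two]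
      simp
    have hgauss2 : (∑ i : Fin (n+1), (i : ℕ)) * 2 = n * n + n := by
      rw [hgauss]; ring
    rw [Finset.sum_add_distrib, hsum_perm σ, hsum_perm τ]
    omega
  calc ∫ x in Sset n 1, ∏ i, ∏ j ∈ Finset.Ioi i, (pExt (n+1) x i - pExt (n+1) x j) ^ 2
      = ∫ x in Sset n 1, ∑ σ : Equiv.Perm (Fin (n+1)), ∑ τ : Equiv.Perm (Fin (n+1)),
          ((Equiv.Perm.sign σ : ℤ) : ℝ) * ((Equiv.Perm.sign τ : ℤ) : ℝ)
            * ∏ i, pExt (n+1) x i ^ ((σ i : ℕ) + (τ i : ℕ)) := by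
        apply integral_congr_ae
        exact Filter.Eventually.of_forall fun x => hpt x
    _ = ∑ σ : Equiv.Perm (Fin (n+1)), ∑ τ : Equiv.Perm (Fin (n+1)),
          ((Equiv.Perm.sign σ : ℤ) : ℝ) * ((Equiv.Perm.sign τ : ℤ) : ℝ)
            * ∫ x in Sset n 1, ∏ i, pExt (n+1) x i ^ ((σ i : ℕ) + (τ i : ℕ)) := by
        rw [integral_finset_sum _ (fun σ _ => integrable_finset_sum _ (fun τ _ =>
          ((monomial_integrable n (fun i => (σ i : ℕ) + (τ i : ℕ))).const_mul _)))]
        apply Finset.sum_congr rfl; intro σ _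
        rw [integral_finset_sum _ (fun τ _ =>
          ((monomial_integrable n (fun i => (σ i : ℕ) + (τ i : ℕ))).const_mul _))]
        apply Finset.sum_congr rfl; intro τ _
        rw [integral_const_mul]
    _ = (∑ σ : Equiv.Perm (Fin (n+1)), ∑ τ : Equiv.Perm (Fin (n+1)),
          ((Equiv.Perm.sign σ : ℤ) : ℝ) * ((Equiv.Perm.sign τ : ℤ) : ℝ)
            * ∏ i, ((((σ i : ℕ) + (τ i : ℕ)).factorial : ℝ))) / (m.factorial : ℝ) := by
        rw [Finset.sum_div]
        apply Finset.sum_congr rfl; intro σ _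
        rw [Finset.sum_div]
        apply Finset.sum_congr rfl; intro τ _
        rw [monomial_integral n (fun i => (σ i : ℕ) + (τ i : ℕ)), hEint σ τ]
        rw [mul_div_assoc]
        congr 1
        push_cast
        ring
    _ = Qbar (n+1) / Real.Gamma (((n+1 : ℕ) : ℝ) ^ 2) := by
        rw [perm_sum (n+1)]
        have hGamma : Real.Gamma (((n+1 : ℕ) : ℝ) ^ 2) = (m.factorial : ℝ) := by
          have h : (((n+1 : ℕ) : ℝ)) ^ 2 = (m : ℝ) + 1 := by
            rw [hm]; push_cast; ring
          rw [h, Real.Gamma_nat_eq_factorial]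
        rw [hGamma, Qbar]
        congr 2
        rw [← Fin.prod_univ_eq_prod_range (fun k => ((k.factorial : ℝ)) ^ 2) (n+1)]
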